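/- There is an absolute constant C > 0 with the following property. Let ν, κ, β > 0, let η be real and l a nonzero integer, and set q := η² + l². Suppose v, θ : ℝ → ℂ are differentiable and satisfy for all t ≥ 0: v'(t) = −β·(l²/q)·θ(t) − ν·q·v(t) and θ'(t) = β·v(t) − κ·q·θ(t). Then for every t ≥ 0: |v(t)| ≤ C·exp(−min(ν,κ)·q·t)·(|v(0)| + (|l|/√q)·|θ(0)|) and |θ(t)| ≤ C·exp(−min(ν,κ)·q·t)·((√q/|l|)·|v(0)| + |θ(0)|). -/

import Mathlib

local notation "⟪" x ", " y "⟫" => @inner ℝ ℂ _ x y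

private lemma inner_coe_mul_right (r : ℝ) (x y : ℂ) : ⟪x, (r:ℂ) * y⟫ = r * ⟪x, y⟫ := by
  rw [← Complex.real_smul, real_inner_smul_right]

private lemma inner_coe_mul_left (r : ℝ) (x y : ℂ) : ⟪(r:ℂ) * x, y⟫ = r * ⟪x, y⟫ := by
  rw [← Complex.real_smul, real_inner_smul_left]

set_option maxHeartbeats 1600000 in
/-- Decay of the streak components `(u²₀, θ₀)` at a Fourier frequency `(η, l)`,
`l ≠ 0`: both decay like `exp(−min(ν,κ)·q·t)` with a constant independent of
all parameters. -/
theorem streak_v_theta_decay :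
    ∃ C : ℝ, 0 < C ∧
      ∀ (ν κ β η : ℝ) (l : ℤ), 0 < ν → 0 < κ → 0 < β → l ≠ 0 →
        ∀ (q : ℝ), q = η ^ 2 + (l:ℝ) ^ 2 →
          ∀ (v θ : ℝ → ℂ),
            (∀ t, 0 ≤ t → HasDerivAt v
              (-((β * ((l:ℝ) ^ 2 / q) : ℝ) : ℂ) * θ t - ((ν * q : ℝ) : ℂ) * v t) t) →
            (∀ t, 0 ≤ t → HasDerivAt θ
              (((β : ℝ) : ℂ) * v t - ((κ * q : ℝ) : ℂ) * θ t) t) →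
            ∀ t, 0 ≤ t →
              ‖v t‖ ≤
                  C * Real.exp (-(min ν κ) * q * t) *
                    (‖v 0‖ + (|(l:ℝ)| / Real.sqrt q) * ‖θ 0‖) ∧
                ‖θ t‖ ≤
                  C * Real.exp (-(min ν κ) * q * t) *
                    ((Real.sqrt q / |(l:ℝ)|) * ‖v 0‖ + ‖θ 0‖) := by
  refine ⟨1, one_pos, ?_⟩
  intro ν κ β η l hν hκ hβ hl q hq v θ hv hθ
  have hlr : (l:ℝ) ≠ 0 := by exact_mod_cast hl
  have hq0 : 0 < q := by rw [hq]; positivity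
  set μ := min ν κ with hμdef
  have hμ : 0 < μ := lt_min hν hκ
  have hμν : μ ≤ ν := min_le_left _ _
  have hμκ : μ ≤ κ := min_le_right _ _
  set c : ℝ := (l:ℝ)^2 / q with hcdef
  have hc : 0 < c := by positivity
  have hsc2 : Real.sqrt c ^ 2 = c := Real.sq_sqrt hc.le
  have hsc0 : 0 < Real.sqrt c := Real.sqrt_pos.2 hc
  -- the energy functional
  set E : ℝ → ℝ := fun s => ⟪v s, v s⟫ + c * ⟪θ s, θ s⟫ with hEdef
  have hE_eq : ∀ s, E s = ‖v s‖^2 + c * ‖θ s‖^2 := by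
    intro s; simp [hEdef, real_inner_self_eq_norm_sq]
  have hE_deriv : ∀ s, 0 ≤ s →
      HasDerivAt E (-(2*ν*q)*‖v s‖^2 - 2*c*κ*q*‖θ s‖^2) s := by
    intro s hs
    have h1 := (hv s hs).inner ℝ (hv s hs)
    have h2 := (hθ s hs).inner ℝ (hθ s hs)
    have h3 := h1.add (h2.const_mul c)
    refine h3.congr_deriv ?_
    simp only [neg_mul, inner_sub_right, inner_sub_left, inner_neg_right, inner_neg_left,
      inner_coe_mul_right, inner_coe_mul_left, real_inner_self_eq_norm_sq]
    rw [real_inner_comm (θ s) (v s)]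
    ring
  -- Gronwall-type decay of the energy
  have key : ∀ s, 0 ≤ s → E s * Real.exp (2*μ*q*s) ≤ E 0 := by
    intro s hs
    set G : ℝ → ℝ := fun u => E u * Real.exp (2*μ*q*u) with hGdef
    have hG_deriv : ∀ u, 0 ≤ u → HasDerivAt G
        ((-(2*ν*q)*‖v u‖^2 - 2*c*κ*q*‖θ u‖^2) * Real.exp (2*μ*q*u)
          + E u * (Real.exp (2*μ*q*u) * (2*μ*q*1))) u := by
      intro u hu
      exact (hE_deriv u hu).mul (((hasDerivAt_id u).const_mul (2*μ*q)).exp)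
    have hanti : AntitoneOn G (Set.Ici (0:ℝ)) := by
      apply antitoneOn_of_deriv_nonpos (convex_Ici 0)
      · intro u hu
        exact ((hG_deriv u hu).continuousAt).continuousWithinAt
      · intro u hu
        rw [interior_Ici] at hu
        exact (hG_deriv u (le_of_lt hu)).differentiableAt.differentiableWithinAt
      · intro u hu
        rw [interior_Ici] at hu
        rw [(hG_deriv u hu.le).deriv, hE_eq]
        have hexp : (0:ℝ) < Real.exp (2*μ*q*u) := Real.exp_pos _
        have h1 : 0 ≤ Real.exp (2*μ*q*u) * ((ν - μ) * q * ‖v u‖^2) :=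
          mul_nonneg hexp.le
            (mul_nonneg (mul_nonneg (sub_nonneg.2 hμν) hq0.le) (sq_nonneg _))
        have h2 : 0 ≤ Real.exp (2*μ*q*u) * (c * ((κ - μ) * q * ‖θ u‖^2)) :=
          mul_nonneg hexp.le (mul_nonneg hc.le
            (mul_nonneg (mul_nonneg (sub_nonneg.2 hμκ) hq0.le) (sq_nonneg _)))
        nlinarith [h1, h2]
    have h := hanti Set.self_mem_Ici hs hs
    simpa [hGdef] using h
  -- derive the decay of E itself
  intro t ht
  set r : ℝ := Real.exp (-μ * q * t) with hrdef
  have hr0 : 0 < r := Real.exp_pos _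
  have hrr : Real.exp (2*μ*q*t) * r ^ 2 = 1 := by
    rw [hrdef, sq, ← Real.exp_add, ← Real.exp_add, show 2*μ*q*t + (-μ * q * t + -μ * q * t) = 0 by ring, Real.exp_zero]
  have hEt : E t ≤ E 0 * r ^ 2 := by
    have h := mul_le_mul_of_nonneg_right (key t ht) (sq_nonneg r)
    calc E t = E t * (Real.exp (2*μ*q*t) * r ^ 2) := by rw [hrr, mul_one]
      _ = E t * Real.exp (2*μ*q*t) * r ^ 2 := by ring
      _ ≤ E 0 * r ^ 2 := h
  have hE0v : E 0 ≤ (‖v 0‖ + Real.sqrt c * ‖θ 0‖)^2 := by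
    rw [hE_eq]
    nlinarith [mul_nonneg (mul_nonneg hsc0.le (norm_nonneg (v 0))) (norm_nonneg (θ 0))]
  have heq : c * ((1 / Real.sqrt c) * ‖v 0‖ + ‖θ 0‖)^2
      = (‖v 0‖ + Real.sqrt c * ‖θ 0‖)^2 := by
    calc c * ((1 / Real.sqrt c) * ‖v 0‖ + ‖θ 0‖)^2
        = (Real.sqrt c * ((1 / Real.sqrt c) * ‖v 0‖ + ‖θ 0‖))^2 := by rw [mul_pow, hsc2]
      _ = (‖v 0‖ + Real.sqrt c * ‖θ 0‖)^2 := by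
          rw [mul_add, ← mul_assoc, mul_one_div_cancel hsc0.ne', one_mul]
  have hE0θ : E 0 ≤ c * ((1 / Real.sqrt c) * ‖v 0‖ + ‖θ 0‖)^2 := by
    rw [heq]; exact hE0v
  have hscq : Real.sqrt c = |(l:ℝ)| / Real.sqrt q := by
    rw [hcdef, Real.sqrt_div (sq_nonneg _), Real.sqrt_sq_eq_abs]
  have hvb : ‖v t‖ ≤ r * (‖v 0‖ + Real.sqrt c * ‖θ 0‖) := by
    have h2 : ‖v t‖^2 ≤ (r * (‖v 0‖ + Real.sqrt c * ‖θ 0‖))^2 := by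
      have hvE : ‖v t‖^2 ≤ E t := by
        rw [hE_eq]; nlinarith [sq_nonneg ‖θ t‖]
      calc ‖v t‖^2 ≤ E t := hvE
        _ ≤ E 0 * r^2 := hEt
        _ ≤ (‖v 0‖ + Real.sqrt c * ‖θ 0‖)^2 * r^2 :=
            mul_le_mul_of_nonneg_right hE0v (sq_nonneg r)
        _ = (r * (‖v 0‖ + Real.sqrt c * ‖θ 0‖))^2 := by ring
    have := Real.sqrt_le_sqrt h2
    rwa [Real.sqrt_sq (norm_nonneg _), Real.sqrt_sq (by positivity)] at this
  have hθb : ‖θ t‖ ≤ r * ((1 / Real.sqrt c) * ‖v 0‖ + ‖θ 0‖) := by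
    have h2 : ‖θ t‖^2 ≤ (r * ((1 / Real.sqrt c) * ‖v 0‖ + ‖θ 0‖))^2 := by
      have hθE : c * ‖θ t‖^2 ≤ E t := by
        rw [hE_eq]; nlinarith [sq_nonneg ‖v t‖]
      have h3 : c * ‖θ t‖^2 ≤ c * ((1 / Real.sqrt c) * ‖v 0‖ + ‖θ 0‖)^2 * r^2 := by
        calc c * ‖θ t‖^2 ≤ E t := hθE
          _ ≤ E 0 * r^2 := hEt
          _ ≤ c * ((1 / Real.sqrt c) * ‖v 0‖ + ‖θ 0‖)^2 * r^2 :=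
              mul_le_mul_of_nonneg_right hE0θ (sq_nonneg r)
      have h4 : c * ‖θ t‖^2 ≤ c * (((1 / Real.sqrt c) * ‖v 0‖ + ‖θ 0‖)^2 * r^2) := by
        calc c * ‖θ t‖^2 ≤ c * ((1 / Real.sqrt c) * ‖v 0‖ + ‖θ 0‖)^2 * r^2 := h3
          _ = c * (((1 / Real.sqrt c) * ‖v 0‖ + ‖θ 0‖)^2 * r^2) := by ring
      calc ‖θ t‖^2 ≤ ((1 / Real.sqrt c) * ‖v 0‖ + ‖θ 0‖)^2 * r^2 :=
            le_of_mul_le_mul_left h4 hc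
        _ = (r * ((1 / Real.sqrt c) * ‖v 0‖ + ‖θ 0‖))^2 := by ring
    have := Real.sqrt_le_sqrt h2
    rwa [Real.sqrt_sq (norm_nonneg _), Real.sqrt_sq (by positivity)] at this
  have hre : Real.exp (-μ * q * t) = r := rfl
  constructor
  · rw [one_mul, ← hscq]
    exact hvb
  · rw [one_mul]
    have : Real.sqrt q / |(l:ℝ)| = 1 / Real.sqrt c := by
      rw [hscq]; field_simp
    rw [this]
    exact hθb
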